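/- Define g(x) = x − (1/2) log((1 + x + x²/2)/(1 − x + x²/2)) for x ∈ ℝ. Then for every real x, |g(x)| ≤ min{ |x|³/5, 3x²/10, |x| }. -/

import Mathlib

noncomputable def gAux (x : ℝ) : ℝ :=
  x - (1 / 2) * Real.log ((1 + x + x ^ 2 / 2) / (1 - x + x ^ 2 / 2))

lemma hD_pos (x : ℝ) : 0 < 1 - x + x ^ 2 / 2 := by nlinarith [sq_nonneg (x - 1)]
lemma hN_pos (x : ℝ) : 0 < 1 + x + x ^ 2 / 2 := by nlinarith [sq_nonneg (x + 1)]

lemma g_hasDeriv (x : ℝ) :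
    HasDerivAt gAux (x ^ 2 * (2 + x ^ 2) / (4 + x ^ 4)) x := by
  have hN := hN_pos x
  have hD := hD_pos x
  have hrw : gAux = fun y : ℝ =>
      y - (1 / 2) * (Real.log (1 + y + y ^ 2 / 2) - Real.log (1 - y + y ^ 2 / 2)) := by
    funext y
    rw [gAux, Real.log_div (hN_pos y).ne' (hD_pos y).ne']
  rw [hrw]
  have hx2 : HasDerivAt (fun y : ℝ => y ^ 2 / 2) ((2 : ℕ) * x ^ (2 - 1) / 2) x :=
    (hasDerivAt_pow 2 x).div_const 2
  have h1 : HasDerivAt (fun y : ℝ => 1 + y + y ^ 2 / 2) (1 + x) x := by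
    have := ((hasDerivAt_id x).const_add 1).add hx2
    refine this.congr_deriv ?_
    norm_num
  have h2 : HasDerivAt (fun y : ℝ => 1 - y + y ^ 2 / 2) (-1 + x) x := by
    have := ((hasDerivAt_id x).const_sub 1).add hx2
    refine this.congr_deriv ?_
    norm_num
  have hl1 := h1.log hN.ne'
  have hl2 := h2.log hD.ne'
  have := (hasDerivAt_id x).sub (((hl1.sub hl2)).const_mul (1 / 2 : ℝ))
  refine this.congr_deriv ?_
  have hND : (1 + x + x ^ 2 / 2) * (1 - x + x ^ 2 / 2) = (4 + x ^ 4) / 4 := by ring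
  rw [div_sub_div _ _ hN.ne' hD.ne', hND]
  field_simp
  ring

lemma incr_on {f f' : ℝ → ℝ} (hf : ∀ x, HasDerivAt f (f' x) x) {a b : ℝ} (hab : a ≤ b)
    (h : ∀ x, a ≤ x → x ≤ b → 0 ≤ f' x) : f a ≤ f b := by
  have hm : MonotoneOn f (Set.Icc a b) := by
    apply monotoneOn_of_deriv_nonneg (convex_Icc a b)
    · exact fun x _ => (hf x).continuousAt.continuousWithinAt
    · intro x hx
      exact (hf x).differentiableAt.differentiableWithinAt
    · intro x hx
      rw [interior_Icc] at hx
      rw [(hf x).deriv]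
      exact h x hx.1.le hx.2.le
  exact hm ⟨le_refl a, hab⟩ ⟨hab, le_refl b⟩ hab

lemma decr_on {f f' : ℝ → ℝ} (hf : ∀ x, HasDerivAt f (f' x) x) {a b : ℝ} (hab : a ≤ b)
    (h : ∀ x, a ≤ x → x ≤ b → f' x ≤ 0) : f b ≤ f a := by
  have := incr_on (f := fun x => -f x) (f' := fun x => -f' x)
    (fun x => (hf x).neg) hab (fun x h1 h2 => by simpa using h x h1 h2)
  have h2 : -f a ≤ -f b := this
  linarith

lemma log_five : (8 : ℝ) / 5 ≤ Real.log 5 := by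
  rw [Real.le_log_iff_exp_le (by norm_num)]
  by_contra h'
  push_neg at h'
  have h5 : (5 : ℝ) ^ (5:ℕ) < (Real.exp (8 / 5)) ^ (5:ℕ) := by
    apply pow_lt_pow_left₀ h' (by norm_num)
    norm_num
  have he : (Real.exp (8 / 5)) ^ (5:ℕ) = Real.exp 8 := by
    rw [← Real.exp_nat_mul]; norm_num
  have h8 : Real.exp 8 = (Real.exp 1) ^ (8:ℕ) := by
    rw [← Real.exp_nat_mul]; norm_num
  have hb : (Real.exp 1) ^ (8:ℕ) < (2.7182818286 : ℝ) ^ (8:ℕ) := by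
    apply pow_lt_pow_left₀ Real.exp_one_lt_d9 (Real.exp_pos 1).le
    norm_num
  rw [he, h8] at h5
  have : (2.7182818286 : ℝ) ^ (8:ℕ) < 5 ^ (5:ℕ) := by norm_num
  linarith

lemma g_one : gAux 1 = 1 - (1 / 2) * Real.log 5 := by
  rw [gAux]; norm_num

lemma g_two : gAux 2 = 2 - (1 / 2) * Real.log 5 := by
  rw [gAux]; norm_num

lemma g_zero : gAux 0 = 0 := by
  rw [gAux]; norm_num

lemma g_nonneg {x : ℝ} (hx : 0 ≤ x) : 0 ≤ gAux x := by
  have := incr_on g_hasDeriv hx (fun y _ _ => by positivity)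
  rw [g_zero] at this; exact this

lemma g_le_self {x : ℝ} (hx : 0 ≤ x) : gAux x ≤ x := by
  have hD := hD_pos x
  have hlog : 0 ≤ Real.log ((1 + x + x ^ 2 / 2) / (1 - x + x ^ 2 / 2)) := by
    apply Real.log_nonneg
    rw [le_div_iff₀ hD]
    nlinarith
  rw [gAux]; nlinarith

lemma g_le_cube {x : ℝ} (hx : 0 ≤ x) : gAux x ≤ x ^ 3 / 5 := by
  set f : ℝ → ℝ := fun y => y ^ 3 / 5 - gAux y with hf
  set f' : ℝ → ℝ := fun y => 3 * y ^ 2 / 5 - y ^ 2 * (2 + y ^ 2) / (4 + y ^ 4) with hf'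
  have hderiv : ∀ y, HasDerivAt f (f' y) y := by
    intro y
    have := ((hasDerivAt_pow 3 y).div_const 5).sub (g_hasDeriv y)
    refine this.congr_deriv ?_
    all_goals simp only [hf']; push_cast; ring
  have hsign : ∀ y : ℝ, f' y = y ^ 2 * ((3 * y ^ 2 - 2) * (y ^ 2 - 1)) / (5 * (4 + y ^ 4)) := by
    intro y
    have h4 : (0:ℝ) < 4 + y ^ 4 := by positivity
    simp only [hf']
    field_simp
    ring
  have hf1 : 0 ≤ f 1 := by
    simp only [hf, g_one]
    nlinarith [log_five]
  have key : 0 ≤ f x := by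
    rcases le_or_gt x (Real.sqrt (2/3)) with h | h
    · -- increasing on [0, x] ⊆ [0, sqrt(2/3)]
      have hs := Real.sq_sqrt (by norm_num : (0:ℝ) ≤ 2/3)
      have hsn := Real.sqrt_nonneg (2/3 : ℝ)
      have := incr_on hderiv hx (fun y hy1 hy2 => by
        rw [hsign]
        have hy3 : y ^ 2 ≤ 2/3 := by nlinarith
        apply div_nonneg _ (by positivity : (0:ℝ) ≤ 5 * (4 + y ^ 4))
        nlinarith [mul_nonneg (mul_nonneg (sq_nonneg y)
          (by linarith : (0:ℝ) ≤ 2 - 3 * y ^ 2)) (by linarith : (0:ℝ) ≤ 1 - y ^ 2)])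
      simpa [hf, g_zero] using this
    · have hs := Real.sq_sqrt (by norm_num : (0:ℝ) ≤ 2/3)
      have hsn := Real.sqrt_nonneg (2/3 : ℝ)
      have hsq : 2/3 ≤ x ^ 2 := by nlinarith
      rcases le_or_gt x 1 with h1 | h1
      · -- decreasing on [x,1]
        have := decr_on hderiv h1 (fun y hy1 hy2 => by
          rw [hsign]
          have hy3 : 2/3 ≤ y ^ 2 := by nlinarith
          apply div_nonpos_of_nonpos_of_nonneg _ (by positivity : (0:ℝ) ≤ 5 * (4 + y ^ 4))
          nlinarith [mul_nonneg (mul_nonneg (sq_nonneg y)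
            (by linarith : (0:ℝ) ≤ 3 * y ^ 2 - 2)) (by nlinarith : (0:ℝ) ≤ 1 - y ^ 2)])
        linarith
      · -- increasing on [1,x]
        have := incr_on hderiv h1.le (fun y hy1 hy2 => by
          rw [hsign]
          apply div_nonneg _ (by positivity : (0:ℝ) ≤ 5 * (4 + y ^ 4))
          nlinarith [mul_nonneg (mul_nonneg (sq_nonneg y)
            (by nlinarith : (0:ℝ) ≤ 3 * y ^ 2 - 2)) (by nlinarith : (0:ℝ) ≤ y ^ 2 - 1)])
        linarith
  simpa [hf] using key

lemma g_le_sq {x : ℝ} (hx : 0 ≤ x) : gAux x ≤ 3 * x ^ 2 / 10 := by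
  set f : ℝ → ℝ := fun y => 3 * y ^ 2 / 10 - gAux y with hf
  set f' : ℝ → ℝ := fun y => 3 * y / 5 - y ^ 2 * (2 + y ^ 2) / (4 + y ^ 4) with hf'
  have hderiv : ∀ y, HasDerivAt f (f' y) y := by
    intro y
    have := (((hasDerivAt_pow 2 y).const_mul 3).div_const 10).sub (g_hasDeriv y)
    refine this.congr_deriv ?_
    all_goals simp only [hf']; push_cast; ring
  have hsign : ∀ y : ℝ, f' y =
      y * (y - 1) * (y - 2) * (3 * y ^ 2 + 4 * y + 6) / (5 * (4 + y ^ 4)) := by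
    intro y
    have h4 : (0:ℝ) < 4 + y ^ 4 := by positivity
    simp only [hf']
    field_simp
    ring
  have hquad : ∀ y : ℝ, (0:ℝ) ≤ 3 * y ^ 2 + 4 * y + 6 := by
    intro y; nlinarith [sq_nonneg (3*y + 2)]
  have hf2 : 0 ≤ f 2 := by
    simp only [hf, g_two]
    nlinarith [log_five]
  have key : 0 ≤ f x := by
    rcases le_or_gt x 1 with h1 | h1
    · have := incr_on hderiv hx (fun y hy1 hy2 => by
        rw [hsign]
        apply div_nonneg _ (by positivity : (0:ℝ) ≤ 5 * (4 + y ^ 4))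
        nlinarith [mul_nonneg (mul_nonneg (mul_nonneg hy1
          (by linarith : (0:ℝ) ≤ 1 - y)) (by linarith : (0:ℝ) ≤ 2 - y)) (hquad y)])
      simpa [hf, g_zero] using this
    · rcases le_or_gt x 2 with h2 | h2
      · have := decr_on hderiv h2 (fun y hy1 hy2 => by
          rw [hsign]
          apply div_nonpos_of_nonpos_of_nonneg _ (by positivity : (0:ℝ) ≤ 5 * (4 + y ^ 4))
          nlinarith [mul_nonneg (mul_nonneg (mul_nonneg (by linarith : (0:ℝ) ≤ y)
            (by linarith : (0:ℝ) ≤ y - 1)) (by linarith : (0:ℝ) ≤ 2 - y)) (hquad y)])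
        linarith
      · have := incr_on hderiv h2.le (fun y hy1 hy2 => by
          rw [hsign]
          apply div_nonneg _ (by positivity : (0:ℝ) ≤ 5 * (4 + y ^ 4))
          nlinarith [mul_nonneg (mul_nonneg (mul_nonneg (by linarith : (0:ℝ) ≤ y)
            (by linarith : (0:ℝ) ≤ y - 1)) (by linarith : (0:ℝ) ≤ y - 2)) (hquad y)])
        linarith
  simpa [hf] using key

lemma g_odd (x : ℝ) : gAux (-x) = - gAux x := by
  rw [gAux, gAux]
  have e1 : 1 + -x + (-x) ^ 2 / 2 = 1 - x + x ^ 2 / 2 := by ring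
  have e2 : 1 - -x + (-x) ^ 2 / 2 = 1 + x + x ^ 2 / 2 := by ring
  rw [e1, e2]
  rw [show (1 - x + x ^ 2 / 2) / (1 + x + x ^ 2 / 2)
      = ((1 + x + x ^ 2 / 2) / (1 - x + x ^ 2 / 2))⁻¹ from (inv_div _ _).symm]
  rw [Real.log_inv]
  ring

lemma abs_g_bounds (x : ℝ) :
    |gAux x| ≤ |x| ^ 3 / 5 ∧ |gAux x| ≤ 3 * x ^ 2 / 10 ∧ |gAux x| ≤ |x| := by
  rcases le_or_gt 0 x with hx | hx
  · rw [abs_of_nonneg (g_nonneg hx), abs_of_nonneg hx]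
    exact ⟨g_le_cube hx, g_le_sq hx, g_le_self hx⟩
  · have hx' : 0 ≤ -x := by linarith
    have h := g_odd x
    have hg : |gAux x| = gAux (-x) := by
      rw [show gAux x = - gAux (-x) by rw [h]; ring]
      rw [abs_neg, abs_of_nonneg (g_nonneg hx')]
    rw [hg, abs_of_neg hx]
    refine ⟨g_le_cube hx', ?_, g_le_self hx'⟩
    have := g_le_sq hx'
    calc gAux (-x) ≤ 3 * (-x) ^ 2 / 10 := this
      _ = 3 * x ^ 2 / 10 := by ring

/-- For `g(x) = x - (1/2) log((1 + x + x²/2)/(1 - x + x²/2))`, one has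
`|g x| ≤ min (|x|³/5) (min (3x²/10) |x|)` for every real `x`. -/
theorem abs_g_le_min (x : ℝ) :
    |x - (1 / 2) * Real.log ((1 + x + x ^ 2 / 2) / (1 - x + x ^ 2 / 2))| ≤
      min (|x| ^ 3 / 5) (min (3 * x ^ 2 / 10) |x|) := by
  obtain ⟨h1, h2, h3⟩ := abs_g_bounds x
  rw [show x - (1 / 2) * Real.log ((1 + x + x ^ 2 / 2) / (1 - x + x ^ 2 / 2)) = gAux x from rfl]
  exact le_min h1 (le_min h2 h3)
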